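/- Let 𝒪 be an infinite order ideal in P = K[x_0,…,x_n] and let J ⊆ P be a homogeneous ideal such that for every d ≥ 0 the residue classes of the terms of 𝒪_d form a K-vector space basis of P_d/J_d. Then there exists exactly one homogeneous ∂𝒪-basis of J. -/

import Mathlib

open MvPolynomial

namespace Border

/-- A term of `K[x_0, …, x_n]`, identified with its exponent vector. -/
abbrev Term (n : ℕ) := Fin (n + 1) →₀ ℕ

variable {n : ℕ}

/-- The (standard) degree of a term. -/
def tdeg (m : Term n) : ℕ := ∑ i, m i

/-- An order ideal: a nonempty set of terms closed under divisors. -/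
def IsOrderIdeal (O : Set (Term n)) : Prop :=
  O.Nonempty ∧ ∀ τ ∈ O, ∀ τ' : Term n, τ' ≤ τ → τ' ∈ O

/-- The border `∂𝒪 = (x_0·𝒪 ∪ ⋯ ∪ x_n·𝒪) ∖ 𝒪`. -/
def border (O : Set (Term n)) : Set (Term n) :=
  {σ | σ ∉ O ∧ ∃ r : Fin (n + 1), ∃ τ ∈ O, σ = τ + Finsupp.single r 1}

/-- Multiplicative set of a border term `σ`, with respect to a labeling `lab` of the border:
`𝒯_σ = {η : σ' ∤ η·σ for every border term σ' with a larger label}`. -/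
def mulSet (O : Set (Term n)) (lab : Term n → ℕ) (σ : Term n) : Set (Term n) :=
  {η | ∀ σ' ∈ border O, lab σ < lab σ' → ¬ σ' ≤ η + σ}

/-- The cone `C(σ) = {η·σ : η ∈ 𝒯_σ}`. -/
def cone (O : Set (Term n)) (lab : Term n → ℕ) (σ : Term n) : Set (Term n) :=
  (fun η => η + σ) '' mulSet O lab σ

/-- A labeling of the border which is injective and ordered increasingly by degree. -/
def DegOrderedLabeling (O : Set (Term n)) (lab : Term n → ℕ) : Prop :=
  Set.InjOn lab (border O) ∧
    ∀ σ ∈ border O, ∀ σ' ∈ border O, lab σ < lab σ' → tdeg σ ≤ tdeg σ'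

/-- Iterated border closures: `∂⁰𝒪 := 𝒪`, and the `(k+1)`-st closure adds the border. -/
def borderClosure (O : Set (Term n)) : ℕ → Set (Term n)
  | 0 => O
  | k + 1 => borderClosure O k ∪ border (borderClosure O k)

/-- The index `ind_𝒪(τ)`: the least `k` with `τ ∈ ∂^k𝒪`. -/
noncomputable def ind (O : Set (Term n)) (τ : Term n) : ℕ :=
  sInf {k | τ ∈ borderClosure O k}

/-- Degree-`d` part of a set of terms. -/
def Od (O : Set (Term n)) (d : ℕ) : Set (Term n) := {τ | τ ∈ O ∧ tdeg τ = d}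

variable {K : Type*} [Field K]

/-- The index of a nonzero polynomial: the maximal index of a term of its support. -/
noncomputable def indP (O : Set (Term n)) (f : MvPolynomial (Fin (n + 1)) K) : ℕ :=
  f.support.sup (ind O)

/-- A homogeneous `∂𝒪`-prebasis: a family `g σ = σ - Σ_{τ ∈ 𝒪_{deg σ}} c_{στ} τ`. -/
def IsPrebasis (O : Set (Term n)) (g : Term n → MvPolynomial (Fin (n + 1)) K) : Prop :=
  ∀ σ ∈ border O, ∀ τ ∈ (monomial σ (1 : K) - g σ).support, τ ∈ O ∧ tdeg τ = tdeg σ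

/-- The set of border reductors `𝒯G = {η·g_σ : σ ∈ ∂𝒪, η ∈ 𝒯_σ}`. -/
def reductors (O : Set (Term n)) (lab : Term n → ℕ)
    (g : Term n → MvPolynomial (Fin (n + 1)) K) : Set (MvPolynomial (Fin (n + 1)) K) :=
  {p | ∃ σ ∈ border O, ∃ η ∈ mulSet O lab σ, p = monomial η (1 : K) * g σ}

/-- The degree-`d` border reductors `𝒯G_d = 𝒯G ∩ P_d`. -/
def reductorsDeg (O : Set (Term n)) (lab : Term n → ℕ)
    (g : Term n → MvPolynomial (Fin (n + 1)) K) (d : ℕ) :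
    Set (MvPolynomial (Fin (n + 1)) K) :=
  reductors O lab g ∩ {p | p.IsHomogeneous d}

/-- One step of the border reduction relation `→_G`. -/
def Step (O : Set (Term n)) (lab : Term n → ℕ)
    (g : Term n → MvPolynomial (Fin (n + 1)) K)
    (f h : MvPolynomial (Fin (n + 1)) K) : Prop :=
  ∃ σ ∈ border O, ∃ η ∈ mulSet O lab σ, η + σ ∈ f.support ∧
    h = f - f.coeff (η + σ) • (monomial η (1 : K) * g σ)

/-- The border reduction relation `→⁺_G` (finitely many, possibly zero, steps). -/
def Reduces (O : Set (Term n)) (lab : Term n → ℕ)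
    (g : Term n → MvPolynomial (Fin (n + 1)) K) :
    MvPolynomial (Fin (n + 1)) K → MvPolynomial (Fin (n + 1)) K → Prop :=
  Relation.ReflTransGen (Step O lab g)

/-- The `K`-vector space spanned by a set of terms. -/
noncomputable def spanTerms (K : Type*) [Field K] (S : Set (Term n)) :
    Submodule K (MvPolynomial (Fin (n + 1)) K) :=
  Submodule.span K ((fun τ => monomial τ (1 : K)) '' S)

/-- The ideal `(G)` generated by a `∂𝒪`-prebasis. -/
noncomputable def idealG (O : Set (Term n)) (g : Term n → MvPolynomial (Fin (n + 1)) K) :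
    Ideal (MvPolynomial (Fin (n + 1)) K) :=
  Ideal.span (g '' border O)

/-- The degree-`d` part `I_d` of an ideal, as a `K`-vector subspace. -/
noncomputable def degPart (I : Ideal (MvPolynomial (Fin (n + 1)) K)) (d : ℕ) :
    Submodule K (MvPolynomial (Fin (n + 1)) K) :=
  Submodule.restrictScalars K I ⊓ homogeneousSubmodule (Fin (n + 1)) K d

/-- Homogeneous ideal. -/
def IsHomogeneousIdeal (I : Ideal (MvPolynomial (Fin (n + 1)) K)) : Prop :=
  ∀ f ∈ I, ∀ d : ℕ, homogeneousComponent d f ∈ I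

/-- `G` is a homogeneous `∂𝒪`-basis of `J`: it is a prebasis contained in `J` and for every
`d` one has `P_d = J_d ⊕ ⟨𝒪_d⟩`, i.e. the residue classes of `𝒪_d` are a basis of `P_d/J_d`. -/
def IsBorderBasisOf (O : Set (Term n)) (g : Term n → MvPolynomial (Fin (n + 1)) K)
    (J : Ideal (MvPolynomial (Fin (n + 1)) K)) : Prop :=
  IsPrebasis O g ∧ (∀ σ ∈ border O, g σ ∈ J) ∧
    ∀ d : ℕ, degPart J d ⊔ spanTerms K (Od O d) = homogeneousSubmodule (Fin (n + 1)) K d ∧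
      Disjoint (degPart J d) (spanTerms K (Od O d))

/-- An `m`-lower representation of `f` by `𝒯G`: `f = Σ c_j • η_j·g_{σ_j}` with distinct
pairs `(η_j, σ_j)`, `η_j ∈ 𝒯_{σ_j}` and `ind(η_j σ_j) ≤ m`. -/
def HasLRep (O : Set (Term n)) (lab : Term n → ℕ)
    (g : Term n → MvPolynomial (Fin (n + 1)) K)
    (f : MvPolynomial (Fin (n + 1)) K) (m : ℕ) : Prop :=
  ∃ (s : Finset (Term n × Term n)) (c : Term n × Term n → K),
    (∀ p ∈ s, p.2 ∈ border O ∧ p.1 ∈ mulSet O lab p.2 ∧ ind O (p.1 + p.2) ≤ m) ∧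
    f = ∑ p ∈ s, c p • (monomial p.1 (1 : K) * g p.2)

/-- An `m`-lower representation of `f` by `𝒯G_d`. -/
def HasLRepDeg (O : Set (Term n)) (lab : Term n → ℕ)
    (g : Term n → MvPolynomial (Fin (n + 1)) K)
    (f : MvPolynomial (Fin (n + 1)) K) (m d : ℕ) : Prop :=
  ∃ (s : Finset (Term n × Term n)) (c : Term n × Term n → K),
    (∀ p ∈ s, p.2 ∈ border O ∧ p.1 ∈ mulSet O lab p.2 ∧ ind O (p.1 + p.2) ≤ m ∧
      (monomial p.1 (1 : K) * g p.2).IsHomogeneous d) ∧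
    f = ∑ p ∈ s, c p • (monomial p.1 (1 : K) * g p.2)

/-- The subtype of terms of `𝒪` of degree `d`. -/
abbrev OdSub (O : Set (Term n)) (d : ℕ) : Type _ := {τ : Term n // τ ∈ Od O d}

lemma tdeg_component_lt {d : ℕ} (m : Term n) (h : tdeg m = d) (i : Fin (n + 1)) :
    m i < d + 1 := by
  have : m i ≤ tdeg m :=
    Finset.single_le_sum (f := fun j => m j) (fun j _ => Nat.zero_le _) (Finset.mem_univ i)
  omega

instance (O : Set (Term n)) (d : ℕ) : Finite (OdSub O d) := by
  have hinj : Function.Injective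
      (fun τ : OdSub O d => fun i : Fin (n + 1) =>
        (⟨τ.1 i, tdeg_component_lt τ.1 τ.2.2 i⟩ : Fin (d + 1))) := by
    intro a b hab
    apply Subtype.ext
    apply Finsupp.ext
    intro i
    simpa using congrArg Fin.val (congrFun hab i)
  exact Finite.of_injective _ hinj

noncomputable instance (O : Set (Term n)) (d : ℕ) : Fintype (OdSub O d) :=
  Fintype.ofFinite _

open scoped Classical in
/-- The `r`-th `d`-graded formal multiplication matrix of a prebasis `G`,
with rows indexed by `𝒪_{d+1}` and columns by `𝒪_d`. -/
noncomputable def multMatrix (O : Set (Term n))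
    (g : Term n → MvPolynomial (Fin (n + 1)) K) (r : Fin (n + 1)) (d : ℕ) :
    Matrix (OdSub O (d + 1)) (OdSub O d) K :=
  Matrix.of fun τ' τ =>
    if τ.1 + Finsupp.single r 1 ∈ O then
      (if τ.1 + Finsupp.single r 1 = τ'.1 then 1 else 0)
    else (monomial (τ.1 + Finsupp.single r 1) (1 : K)
            - g (τ.1 + Finsupp.single r 1)).coeff τ'.1

/-- The minimum degree of a border term. -/
noncomputable def minDegBorder (O : Set (Term n)) : ℕ := sInf (tdeg '' border O)

/-- The `d`-th Macaulay transformation `a^{⟨d⟩}`, computed greedily. -/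
noncomputable def macaulay : ℕ → ℕ → ℕ
  | 0, _ => 0
  | d + 1, a =>
    if a = 0 then 0
    else
      Nat.choose (sSup {k | Nat.choose k (d + 1) ≤ a} + 1) (d + 2) +
        macaulay d (a - Nat.choose (sSup {k | Nat.choose k (d + 1) ≤ a}) (d + 1))

/-- An ideal is generated in degrees `≤ m` if it is generated by its homogeneous
elements of degree `≤ m`. -/
def GeneratedInDegLE (I : Ideal (MvPolynomial (Fin (n + 1)) K)) (m : ℕ) : Prop :=
  I = Ideal.span {f | f ∈ I ∧ ∃ d ≤ m, f.IsHomogeneous d}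

lemma tdeg_eq_degree (m : Term n) : tdeg m = m.degree := by
  rw [Finsupp.degree, tdeg]
  exact (Finset.sum_subset m.support.subset_univ
    (fun x _ hx => Finsupp.notMem_support_iff.1 hx)).symm

lemma support_subset_of_mem_spanTerms {S : Set (Term n)} {f : MvPolynomial (Fin (n+1)) K}
    (hf : f ∈ spanTerms K S) : ↑f.support ⊆ S := by
  classical
  refine Submodule.span_induction ?_ ?_ ?_ ?_ hf
  · rintro p ⟨τ, hτ, rfl⟩ m hm
    rw [MvPolynomial.support_monomial, if_neg one_ne_zero] at hm
    simp only [Finset.coe_singleton, Set.mem_singleton_iff] at hm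
    exact hm ▸ hτ
  · simp
  · intro a b _ _ ha hb m hm
    rcases Finset.mem_union.1 (MvPolynomial.support_add hm) with h | h
    · exact ha h
    · exact hb h
  · intro c a _ ha m hm
    exact ha (MvPolynomial.support_smul hm)

lemma mem_spanTerms_of_support_subset {S : Set (Term n)} {f : MvPolynomial (Fin (n+1)) K}
    (hf : ↑f.support ⊆ S) : f ∈ spanTerms K S := by
  rw [← MvPolynomial.support_sum_monomial_coeff f]
  refine Submodule.sum_mem _ fun τ hτ => ?_
  have : (monomial τ (f.coeff τ) : MvPolynomial (Fin (n+1)) K)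
      = f.coeff τ • monomial τ (1 : K) := by
    rw [MvPolynomial.smul_monomial, smul_eq_mul, mul_one]
  rw [this]
  exact Submodule.smul_mem _ _ (Submodule.subset_span ⟨τ, hf hτ, rfl⟩)

lemma spanTerms_le_homogeneous (O : Set (Term n)) (d : ℕ) :
    spanTerms K (Od O d) ≤ homogeneousSubmodule (Fin (n+1)) K d := by
  refine Submodule.span_le.2 ?_
  rintro p ⟨τ, hτ, rfl⟩
  rw [SetLike.mem_coe, mem_homogeneousSubmodule]
  exact isHomogeneous_monomial _ ((tdeg_eq_degree τ) ▸ hτ.2)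

/-- **Existence and uniqueness.** If `𝒪` is an infinite order ideal and `J` a homogeneous
ideal such that the residue classes of `𝒪_d` form a basis of `P_d/J_d` for every `d`, then
there is exactly one homogeneous `∂𝒪`-basis of `J`. -/
theorem existsUnique_borderBasis (O : Set (Term n)) (hO : IsOrderIdeal O)
    (hinf : O.Infinite)
    (J : Ideal (MvPolynomial (Fin (n + 1)) K)) (hJ : IsHomogeneousIdeal J)
    (hres : ∀ d : ℕ,
      degPart J d ⊔ spanTerms K (Od O d) = homogeneousSubmodule (Fin (n + 1)) K d ∧
      Disjoint (degPart J d) (spanTerms K (Od O d))) :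
    ∃ g : Term n → MvPolynomial (Fin (n + 1)) K, IsBorderBasisOf O g J ∧
      ∀ g' : Term n → MvPolynomial (Fin (n + 1)) K, IsBorderBasisOf O g' J →
        ∀ σ ∈ border O, g' σ = g σ := by
  classical
  have key : ∀ σ, σ ∈ border O → ∃ j, j ∈ degPart J (tdeg σ) ∧
      monomial σ (1 : K) - j ∈ spanTerms K (Od O (tdeg σ)) := by
    intro σ hσ
    have hm : (monomial σ (1 : K)) ∈ homogeneousSubmodule (Fin (n + 1)) K (tdeg σ) := by
      rw [mem_homogeneousSubmodule]
      exact isHomogeneous_monomial _ (tdeg_eq_degree σ).symm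
    rw [← (hres (tdeg σ)).1] at hm
    obtain ⟨j, hj, o, ho, hjo⟩ := Submodule.mem_sup.1 hm
    exact ⟨j, hj, by rw [← hjo]; simpa using ho⟩
  choose j hj1 hj2 using key
  refine ⟨fun σ => if h : σ ∈ border O then j σ h else 0, ⟨?_, ?_, hres⟩, ?_⟩
  · intro σ hσ τ hτ
    simp only [dif_pos hσ] at hτ
    exact support_subset_of_mem_spanTerms (hj2 σ hσ) hτ
  · intro σ hσ
    simp only [dif_pos hσ]
    exact (Submodule.mem_inf.1 (hj1 σ hσ)).1
  · intro g' hg' σ hσ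
    simp only [dif_pos hσ]
    have h1' : monomial σ (1 : K) - g' σ ∈ spanTerms K (Od O (tdeg σ)) :=
      mem_spanTerms_of_support_subset (fun τ hτ => hg'.1 σ hσ τ hτ)
    have hs : g' σ - j σ hσ ∈ spanTerms K (Od O (tdeg σ)) := by
      have := sub_mem (hj2 σ hσ) h1'
      rwa [sub_sub_sub_cancel_left] at this
    have hd : g' σ - j σ hσ ∈ degPart J (tdeg σ) := by
      refine Submodule.mem_inf.2 ⟨?_, spanTerms_le_homogeneous O (tdeg σ) hs⟩
      exact sub_mem (hg'.2.1 σ hσ) (Submodule.mem_inf.1 (hj1 σ hσ)).1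
    have := Submodule.disjoint_def.1 (hres (tdeg σ)).2 _ hd hs
    exact sub_eq_zero.1 this

end Border
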